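/- (Membership lemma, finite restricted set) There exists a constant C > 0, independent of m, n and k, such that for every m, n, k ∈ ℕ with k ≥ 1, all vectors b, a_1, …, a_n ∈ ℝ^m, and every finite set X ⊆ ℝ^n such that b ≠ Σ_{i=1}^n y_i·a_i for all y ∈ X, the probability, with respect to the product Gaussian measure on k×m real matrices P (each entry i.i.d. standard normal N(0,1)), of the event {for all y ∈ X: T_P(b) ≠ Σ_{i=1}^n y_i·T_P(a_i)} is at least 1 − 2·|X|·exp(−C·k), where T_P(z) = (1/√k)·P·z and |X| denotes the cardinality of X. -/
import Mathlib


open MeasureTheory ProbabilityTheory ENNReal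

/-- The product Gaussian measure on `k × m` real matrices: each entry is an independent
standard normal `N(0,1)` random variable. -/
noncomputable def gaussMeasure (k m : ℕ) : Measure (Fin k → Fin m → ℝ) :=
  Measure.pi fun _ : Fin k => Measure.pi fun _ : Fin m => gaussianReal 0 1

/-- The random linear map associated to a `k × m` matrix `P`: `T_P(z) = (1/√k) · P · z`. -/
noncomputable def TP {k m : ℕ} (P : Fin k → Fin m → ℝ)
    (x : EuclideanSpace ℝ (Fin m)) : EuclideanSpace ℝ (Fin k) :=
  (Real.sqrt k)⁻¹ • (EuclideanSpace.equiv (Fin k) ℝ).symm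
    ((Matrix.of P).mulVec (EuclideanSpace.equiv (Fin m) ℝ x))

-- pi AC lemma
lemma pi_absolutelyContinuous : ∀ {N : ℕ} (μ ν : Fin N → Measure ℝ),
    (∀ i, SigmaFinite (μ i)) → (∀ i, SigmaFinite (ν i)) →
    (∀ i, μ i ≪ ν i) → Measure.pi μ ≪ Measure.pi ν := by
  intro N
  induction N with
  | zero =>
    intro μ ν _ _ _
    rw [Measure.pi_of_empty, Measure.pi_of_empty]
  | succ n ih =>
    intro μ ν hμ hν h
    have := hμ; have := hν
    have e := MeasurableEquiv.piFinSuccAbove (fun _ : Fin (n+1) => ℝ) 0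
    have h1 := (measurePreserving_piFinSuccAbove μ 0).map_eq
    have h2 := (measurePreserving_piFinSuccAbove ν 0).map_eq
    have hμe : Measure.pi μ =
        ((μ 0).prod (Measure.pi fun j => μ ((0 : Fin (n+1)).succAbove j))).map
          (MeasurableEquiv.piFinSuccAbove (fun _ : Fin (n+1) => ℝ) 0).symm := by
      rw [← h1, MeasurableEquiv.map_symm_map]
    have hνe : Measure.pi ν =
        ((ν 0).prod (Measure.pi fun j => ν ((0 : Fin (n+1)).succAbove j))).map
          (MeasurableEquiv.piFinSuccAbove (fun _ : Fin (n+1) => ℝ) 0).symm := by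
      rw [← h2, MeasurableEquiv.map_symm_map]
    rw [hμe, hνe]
    exact ((h 0).prod (ih _ _ (fun i => hμ _) (fun i => hν _) (fun i => h _))).map
      (MeasurableEquiv.piFinSuccAbove (fun _ : Fin (n+1) => ℝ) 0).symm.measurable

-- hyperplane null under pi gaussian
lemma gauss_hyperplane_null {m : ℕ} {v : Fin m → ℝ} (hv : v ≠ 0) :
    (Measure.pi fun _ : Fin m => gaussianReal 0 1) {x : Fin m → ℝ | ∑ i, x i * v i = 0} = 0 := by
  have hac : (Measure.pi fun _ : Fin m => gaussianReal 0 1) ≪ (Measure.pi fun _ : Fin m => (volume : Measure ℝ)) :=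
    pi_absolutelyContinuous _ _ (fun _ => inferInstance) (fun _ => inferInstance)
      (fun _ => gaussianReal_absolutelyContinuous 0 one_ne_zero)
  apply hac
  have hvol : (Measure.pi fun _ : Fin m => (volume : Measure ℝ)) = volume := by
    rfl
  rw [hvol]
  set f : (Fin m → ℝ) →ₗ[ℝ] ℝ :=
    { toFun := fun x => ∑ i, x i * v i
      map_add' := by intro x y; simp [add_mul, Finset.sum_add_distrib]
      map_smul' := by intro c x; simp [Finset.mul_sum, mul_assoc]
    }
  have hker : LinearMap.ker f ≠ ⊤ := by
    obtain ⟨i0, hi0⟩ := Function.ne_iff.mp hv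
    intro htop
    have : f (Pi.single i0 1) = 0 := by
      rw [← LinearMap.mem_ker, htop]; trivial
    simp only [f, LinearMap.coe_mk, AddHom.coe_mk] at this
    rw [Finset.sum_eq_single i0] at this
    · simp at this; exact hi0 this
    · intro j _ hj; simp [Pi.single_apply, hj]
    · simp
  have : {x : Fin m → ℝ | ∑ i, x i * v i = 0} = ↑(LinearMap.ker f) := by
    ext x; simp [LinearMap.mem_ker, f]
  rw [this]
  exact Measure.addHaar_submodule _ _ hker

lemma event_mulVec {k m n : ℕ} (hk : 1 ≤ k) (b : EuclideanSpace ℝ (Fin m))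
    (a : Fin n → EuclideanSpace ℝ (Fin m)) (y : Fin n → ℝ) (P : Fin k → Fin m → ℝ)
    (h : TP P b = ∑ i, y i • TP P (a i)) :
    (Matrix.of P).mulVec
      (EuclideanSpace.equiv (Fin m) ℝ b - ∑ i, y i • EuclideanSpace.equiv (Fin m) ℝ (a i)) = 0 := by
  have hs : (Real.sqrt k)⁻¹ ≠ 0 := by
    have : (0:ℝ) < Real.sqrt k := Real.sqrt_pos.mpr (by exact_mod_cast hk)
    positivity
  have h2 := congrArg (EuclideanSpace.equiv (Fin k) ℝ) h
  simp only [TP, map_sum, _root_.map_smul, ContinuousLinearEquiv.apply_symm_apply] at h2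
  rw [show (∑ i, y i • (Real.sqrt k)⁻¹ • (Matrix.of P).mulVec (EuclideanSpace.equiv (Fin m) ℝ (a i)))
      = (Real.sqrt k)⁻¹ • ∑ i, y i • (Matrix.of P).mulVec (EuclideanSpace.equiv (Fin m) ℝ (a i)) by
    rw [Finset.smul_sum]; exact Finset.sum_congr rfl fun i _ => smul_comm _ _ _] at h2
  have h3 := smul_right_injective (Fin k → ℝ) hs h2
  simp only [← Matrix.mulVecLin_apply] at h3 ⊢
  rw [map_sub, map_sum, h3]
  simp [sub_eq_zero]

lemma w_ne_zero {m n : ℕ} (b : EuclideanSpace ℝ (Fin m)) (a : Fin n → EuclideanSpace ℝ (Fin m))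
    (y : Fin n → ℝ) (hby : b ≠ ∑ i, y i • a i) :
    (EuclideanSpace.equiv (Fin m) ℝ b - ∑ i, y i • EuclideanSpace.equiv (Fin m) ℝ (a i)) ≠ 0 := by
  intro h0
  apply hby
  have : EuclideanSpace.equiv (Fin m) ℝ b = EuclideanSpace.equiv (Fin m) ℝ (∑ i, y i • a i) := by
    rw [map_sum]
    simp only [_root_.map_smul]
    exact sub_eq_zero.mp h0
  exact (EuclideanSpace.equiv (Fin m) ℝ).injective this

/-- **Membership lemma, finite restricted set.**
There is a constant `C > 0`, independent of `m`, `n` and `k`, such that for all `m`, `n`,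
`k ≥ 1`, all `b, a_1, …, a_n ∈ ℝ^m` and every finite set `X ⊆ ℝ^n` with
`b ≠ Σ_i y_i · a_i` for all `y ∈ X`, the Gaussian measure of the set of matrices `P` such
that `T_P b ≠ Σ_i y_i · T_P (a_i)` for all `y ∈ X` is at least `1 - 2·|X|·exp(-C·k)`. -/
theorem membership_lemma_finite :
    ∃ C : ℝ, C > 0 ∧
      ∀ m n k : ℕ, 1 ≤ k →
        ∀ (b : EuclideanSpace ℝ (Fin m)) (a : Fin n → EuclideanSpace ℝ (Fin m))
          (X : Finset (Fin n → ℝ)), (∀ y ∈ X, b ≠ ∑ i, y i • a i) →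
          gaussMeasure k m {P | ∀ y ∈ X, TP P b ≠ ∑ i, y i • TP P (a i)} ≥
            ENNReal.ofReal (1 - 2 * X.card * Real.exp (-C * k)) := by
  refine ⟨1, one_pos, ?_⟩
  intro m n k hk b a X hX
  have hprob : IsProbabilityMeasure (gaussMeasure k m) := by
    unfold gaussMeasure; infer_instance
  set S := {P : Fin k → Fin m → ℝ | ∀ y ∈ X, TP P b ≠ ∑ i, y i • TP P (a i)} with hS
  have hcompl : gaussMeasure k m Sᶜ = 0 := by
    have hsub : Sᶜ ⊆ ⋃ y ∈ X, {P : Fin k → Fin m → ℝ | TP P b = ∑ i, y i • TP P (a i)} := by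
      intro P hP
      simp only [hS, Set.mem_compl_iff, Set.mem_setOf_eq, not_forall] at hP
      obtain ⟨y, hy, heq⟩ := hP
      exact Set.mem_biUnion hy (not_not.mp heq)
    refine measure_mono_null hsub ?_
    refine (measure_biUnion_null_iff X.countable_toSet).mpr ?_
    intro y hy
    set w := (EuclideanSpace.equiv (Fin m) ℝ b - ∑ i, y i • EuclideanSpace.equiv (Fin m) ℝ (a i))
      with hw
    have hwne : w ≠ 0 := w_ne_zero b a y (hX y hy)
    have hsub2 : {P : Fin k → Fin m → ℝ | TP P b = ∑ i, y i • TP P (a i)} ⊆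
        Function.eval (⟨0, hk⟩ : Fin k) ⁻¹' {x : Fin m → ℝ | ∑ i, x i * w i = 0} := by
      intro P hP
      have := event_mulVec hk b a y P hP
      have h0 := congrFun this (⟨0, hk⟩ : Fin k)
      simpa [hw, Matrix.mulVec, dotProduct] using h0
    refine measure_mono_null hsub2 ?_
    exact Measure.pi_eval_preimage_null _ (gauss_hyperplane_null hwne)
  have hone : (1 : ℝ≥0∞) ≤ gaussMeasure k m S := by
    have := measure_union_le (μ := gaussMeasure k m) S Sᶜ
    rw [Set.union_compl_self, measure_univ, hcompl, add_zero] at this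
    exact this
  calc gaussMeasure k m S ≥ 1 := hone
    _ ≥ ENNReal.ofReal (1 - 2 * X.card * Real.exp (-1 * k)) := by
        refine ENNReal.ofReal_le_one.mpr ?_
        have : (0:ℝ) ≤ 2 * X.card * Real.exp (-1 * k) := by positivity
        linarith
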